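/- Let σ : Σ* × Σ* → Σ* be a total, associative function that has polynomially bounded outputs, i.e., there exists a polynomial p with natural-number coefficients such that |s₁ σ s₂| < p(max{|s₁|, |s₂|}) for all s₁, s₂ ∈ Σ*. Then there exists a natural number j > 1 such that for every natural number k > 1 and all strings s₁, …, s_k ∈ Σ*, |s₁ σ ⋯ σ s_k| < (max{2, |s₁|, …, |s_k|})^(j^⌈log₂ k⌉). -/

import Mathlib

private lemma poly_mono (p : Polynomial ℕ) {a b : ℕ} (h : a ≤ b) :
    p.eval a ≤ p.eval b := by
  rw [Polynomial.eval_eq_sum_range, Polynomial.eval_eq_sum_range]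
  exact Finset.sum_le_sum fun i _ => Nat.mul_le_mul_left _ (Nat.pow_le_pow_left h i)

private lemma poly_bound (p : Polynomial ℕ) {n : ℕ} (hn : 2 ≤ n) :
    p.eval n < n ^ (p.eval 1 + p.natDegree + 2) := by
  set S := p.eval 1 with hS
  set d := p.natDegree with hd
  have h1 : p.eval n ≤ S * n ^ d := by
    rw [Polynomial.eval_eq_sum_range, hS, Polynomial.eval_eq_sum_range (p := p) 1]
    rw [Finset.sum_mul]
    refine Finset.sum_le_sum fun i hi => ?_
    simp only [one_pow, mul_one]
    exact Nat.mul_le_mul_left _ (Nat.pow_le_pow_right (by omega) (by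
      have := Finset.mem_range.mp hi; omega))
  have hSn : S < n ^ S := lt_of_lt_of_le (Nat.lt_two_pow_self (n := S)) (Nat.pow_le_pow_left hn S)
  calc p.eval n ≤ S * n ^ d := h1
    _ < n ^ S * n ^ d := by
        exact Nat.mul_lt_mul_of_lt_of_le hSn le_rfl (Nat.pow_pos (by omega))
    _ = n ^ (S + d) := by rw [← pow_add]
    _ ≤ n ^ (S + d + 2) := Nat.pow_le_pow_right (by omega) (by omega)

private lemma le_foldl_max (l : List ℕ) (b : ℕ) : b ≤ l.foldl max b := by
  induction l generalizing b with
  | nil => exact le_rfl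
  | cons h t ih => exact le_trans (le_max_left b h) (ih _)

private lemma mem_le_foldl_max {x : ℕ} {l : List ℕ} (hx : x ∈ l) (b : ℕ) :
    x ≤ l.foldl max b := by
  induction l generalizing b with
  | nil => cases hx
  | cons h t ih =>
    rcases List.mem_cons.mp hx with rfl | hx
    · exact le_trans (le_max_right b x) (le_foldl_max t _)
    · exact ih hx _

private lemma foldl_assoc (σ : List Bool → List Bool → List Bool)
    (hassoc : ∀ x y z : List Bool, σ (σ x y) z = σ x (σ y z))
    (a b : List Bool) (l : List (List Bool)) :
    l.foldl σ (σ a b) = σ a (l.foldl σ b) := by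
  induction l generalizing b with
  | nil => rfl
  | cons c t ih => simp only [List.foldl_cons, hassoc, ih]

private lemma foldl_split (σ : List Bool → List Bool → List Bool)
    (hassoc : ∀ x y z : List Bool, σ (σ x y) z = σ x (σ y z))
    (a b : List Bool) (l₁ l₂ : List (List Bool)) :
    (l₁ ++ b :: l₂).foldl σ a = σ (l₁.foldl σ a) (l₂.foldl σ b) := by
  rw [List.foldl_append, List.foldl_cons, foldl_assoc σ hassoc]

/-- If a total, associative σ has polynomially bounded outputs,
then there is j > 1 such that for all k > 1 and strings s₁, …, s_k,
|s₁ σ ⋯ σ s_k| < (max{2, |s₁|, …, |s_k|})^(j^⌈log₂ k⌉). -/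
theorem stmt_6 (σ : List Bool → List Bool → List Bool)
    (hassoc : ∀ x y z : List Bool, σ (σ x y) z = σ x (σ y z))
    (p : Polynomial ℕ)
    (hpoly : ∀ s₁ s₂ : List Bool,
      (σ s₁ s₂).length < p.eval (max s₁.length s₂.length)) :
    ∃ j : ℕ, 1 < j ∧
      ∀ (k : ℕ), 1 < k → ∀ (s₁ : List Bool) (rest : List (List Bool)),
        rest.length + 1 = k →
        (rest.foldl σ s₁).length <
          ((rest.map List.length).foldl max (max 2 s₁.length)) ^ (j ^ Nat.clog 2 k) := by
  set j := p.eval 1 + p.natDegree + 2 with hj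
  have hj1 : 1 < j := by omega
  have hpb : ∀ n : ℕ, 2 ≤ n → p.eval n < n ^ j := fun n hn => poly_bound p hn
  refine ⟨j, hj1, ?_⟩
  -- core induction
  have core : ∀ n : ℕ, 1 ≤ n → ∀ N : ℕ, 2 ≤ N → ∀ (a : List Bool) (l : List (List Bool)),
      a.length ≤ N → (∀ x ∈ l, x.length ≤ N) → l.length + 1 ≤ 2 ^ n →
      (l.foldl σ a).length < N ^ (j ^ n) := by
    intro n
    induction n with
    | zero => omega
    | succ n ih =>
      intro _ N hN a l ha hl hlen
      by_cases hn0 : n = 0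
      · subst hn0
        -- l.length ≤ 1
        norm_num at hlen
        rcases l with _ | ⟨b, t⟩
        · simp only [List.foldl_nil]
          calc a.length ≤ N := ha
            _ = N ^ 1 := (pow_one N).symm
            _ < N ^ j := Nat.pow_lt_pow_right (by omega) hj1
            _ = N ^ (j ^ 1) := by rw [pow_one]
        · have ht : t = [] := by
            simp only [List.length_cons] at hlen
            exact List.length_eq_zero_iff.mp (by omega)
          subst ht
          simp only [List.foldl_cons, List.foldl_nil]
          calc (σ a b).length < p.eval (max a.length b.length) := hpoly a b
            _ ≤ p.eval N := poly_mono p (max_le ha (hl b (by simp)))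
            _ < N ^ j := hpb N hN
            _ = N ^ (j ^ 1) := by rw [pow_one]
      · have hn1 : 1 ≤ n := by omega
        have hjn : 0 < j ^ n := Nat.pow_pos (by omega)
        have hQ2 : 2 ≤ N ^ (j ^ n) :=
          le_trans hN (Nat.le_self_pow (by omega) N)
        have h2n : (2:ℕ) ^ (n+1) = 2 * 2 ^ n := by rw [pow_succ]; ring
        have h2pos : 0 < (2:ℕ) ^ n := Nat.pow_pos (by omega)
        by_cases hsmall : l.length + 1 ≤ 2 ^ n
        · exact lt_of_lt_of_le (ih hn1 N hN a l ha hl hsmall)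
            (Nat.pow_le_pow_right (by omega)
              (Nat.pow_le_pow_right (by omega) (Nat.le_succ n)))
        · set t := 2 ^ n - 1 with hT
          rcases hd : l.drop t with _ | ⟨b, l₂⟩
          · exfalso
            have := List.length_drop (i := t) (l := l)
            rw [hd] at this
            simp at this
            omega
          have hsplit : l = l.take t ++ b :: l₂ := by rw [← hd, List.take_append_drop]
          have hlentake : (l.take t).length = t := by
            rw [List.length_take]; omega
          have hlendrop : l₂.length + 1 = l.length - t := by
            have := List.length_drop (i := t) (l := l)
            rw [hd] at this
            simp only [List.length_cons] at this
            omega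
          have h₁ : ((l.take t).foldl σ a).length < N ^ (j ^ n) :=
            ih hn1 N hN a _ ha (fun x hx => hl x (List.mem_of_mem_take hx))
              (by omega)
          have hb : b ∈ l := by rw [hsplit]; simp
          have h₂ : (l₂.foldl σ b).length < N ^ (j ^ n) :=
            ih hn1 N hN b l₂ (hl b hb)
              (fun x hx => hl x (by rw [hsplit]; simp [hx]))
              (by omega)
          rw [hsplit, foldl_split σ hassoc]
          calc (σ ((l.take t).foldl σ a) (l₂.foldl σ b)).length
              < p.eval (max ((l.take t).foldl σ a).length (l₂.foldl σ b).length) :=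
                hpoly _ _
            _ ≤ p.eval (N ^ (j ^ n)) := poly_mono p (max_le h₁.le h₂.le)
            _ < (N ^ (j ^ n)) ^ j := hpb _ hQ2
            _ = N ^ (j ^ (n + 1)) := by rw [← pow_mul, ← pow_succ]
  intro k hk s₁ rest hrest
  set N := (rest.map List.length).foldl max (max 2 s₁.length) with hNdef
  have hN2 : 2 ≤ N := le_trans (le_max_left 2 _) (le_foldl_max _ _)
  have ha : s₁.length ≤ N := le_trans (le_max_right 2 _) (le_foldl_max _ _)
  have hl : ∀ x ∈ rest, x.length ≤ N := fun x hx =>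
    mem_le_foldl_max (List.mem_map_of_mem (f := List.length) hx) _
  have hn1 : 1 ≤ Nat.clog 2 k := Nat.clog_pos (by norm_num) (by omega)
  have hlen : rest.length + 1 ≤ 2 ^ Nat.clog 2 k := by
    rw [hrest]; exact Nat.le_pow_clog (by norm_num) k
  exact core (Nat.clog 2 k) hn1 N hN2 s₁ rest ha hl hlen
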